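/- The second cumulant (variance) of log|det X_n| for the GUE satisfies Γ_2(n,2) = (1/2)·log(2⌊n/2⌋) + (1/2)·(γ + log 2 + 1) + O(1/n) as n → ∞, where γ is the Euler–Mascheroni constant. -/

import Mathlib

open Filter

/-- The moment generating function of the log-determinant of an `n × n` GUE matrix:
`M_{n,2}(s) = 2^{ns/2} · ∏_{m=1}^{n} Γ(s/2 + 1/2 + ⌊m/2⌋)/Γ(1/2 + ⌊m/2⌋)`. -/
noncomputable def gueMgf (n : ℕ) (s : ℝ) : ℝ :=
  (2 : ℝ) ^ ((n : ℝ) * s / 2) *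
    ∏ m ∈ Finset.Icc 1 n,
      Real.Gamma (s / 2 + 1/2 + (m / 2 : ℕ)) / Real.Gamma (1/2 + (m / 2 : ℕ))

/-- The `j`-th cumulant of the log-determinant of an `n × n` GUE matrix. -/
noncomputable def gueCumulant (j n : ℕ) : ℝ :=
  iteratedDeriv j (fun s => Real.log (gueMgf n s)) 0

open Real Filter Topology Set


/-- Trigamma series. -/
noncomputable def tri (x : ℝ) : ℝ := ∑' j : ℕ, 1 / (x + j)^2

/-- Digamma (as bare derivative of `log ∘ Gamma`). -/
noncomputable def psi (x : ℝ) : ℝ := deriv (fun y => Real.log (Real.Gamma y)) x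

lemma summable_tri {x : ℝ} (hx : 0 < x) : Summable (fun j : ℕ => 1 / (x + j)^2) := by
  rw [← summable_nat_add_iff 1]
  have h : Summable (fun j : ℕ => 1 / ((j : ℝ) + 1)^2) := by
    have := (Real.summable_one_div_nat_pow (p := 2)).2 (by norm_num)
    have h2 := (summable_nat_add_iff (f := fun n : ℕ => 1 / (n:ℝ)^2) 1).2 this
    simpa [add_comm] using h2
  refine h.of_nonneg_of_le (fun j => by positivity) (fun j => ?_)
  have h2 : ((j:ℝ) + 1) ≤ x + (j + 1 : ℕ) := by push_cast; linarith
  gcongr <;> first | positivity | exact h2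

lemma tri_pos {x : ℝ} (hx : 0 < x) : 0 < tri x := by
  have hs := summable_tri hx
  have h0 : (0:ℝ) < 1 / (x + (0:ℕ))^2 := by
    have : x + (0:ℕ) = x := by push_cast; ring
    rw [this]; positivity
  exact lt_of_lt_of_le h0 (Summable.le_tsum hs 0 (fun j _ => by positivity))

lemma tri_shift {x : ℝ} (hx : 0 < x) : tri x = 1 / x^2 + tri (x + 1) := by
  rw [tri, Summable.tsum_eq_zero_add (summable_tri hx)]
  congr 1
  · norm_num
  · rw [tri]
    congr 1
    funext j
    push_cast
    ring_nf

lemma tri_le {x : ℝ} (hx : 1 < x) : tri x ≤ 1 / (x - 1) := by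
  have hx0 : 0 < x := by linarith
  refine Real.tsum_le_of_sum_range_le (f := fun j : ℕ => 1/(x+j)^2) (fun j => by positivity)
    (fun n => ?_)
  have key : ∀ j : ℕ, 1/(x+j)^2 ≤ 1/(x - 1 + j) - 1/(x + j) := by
    intro j
    have h1 : (0:ℝ) < x - 1 + j := by
      have := (Nat.cast_nonneg j : (0:ℝ) ≤ j); linarith
    have h2 : (0:ℝ) < x + j := by positivity
    rw [div_sub_div _ _ (ne_of_gt h1) (ne_of_gt h2)]
    rw [div_le_div_iff₀ (by positivity) (by positivity)]
    nlinarith [sq_nonneg (x + j)]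
  calc ∑ j ∈ Finset.range n, 1/(x+j)^2
      ≤ ∑ j ∈ Finset.range n, (1/(x - 1 + j) - 1/(x + j)) := Finset.sum_le_sum (fun j _ => key j)
    _ = 1/(x-1) - 1/(x-1+n) := by
        have h : ∀ j : ℕ, 1/(x - 1 + j) - 1/(x + j) = (fun i : ℕ => 1/(x-1+i)) j - (fun i : ℕ => 1/(x-1+i)) (j+1) := by
          intro j; push_cast; ring_nf
        rw [Finset.sum_congr rfl (fun j _ => h j), Finset.sum_range_sub']
        simp
    _ ≤ 1/(x-1) := by
        have h1 : (0:ℝ) < x - 1 + n := by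
          have := (Nat.cast_nonneg n : (0:ℝ) ≤ n); linarith
        have : (0:ℝ) ≤ 1/(x-1+n) := by positivity
        linarith

lemma le_tri {x : ℝ} (hx : 0 < x) : 1 / (x + 1) ≤ tri x := by
  have key : ∀ n : ℕ, 1/x - 1/(x+n) ≤ ∑ j ∈ Finset.range n, 1/(x+j)^2 := by
    intro n
    have step : ∀ j : ℕ, 1/(x+j) - 1/(x+(j+1):ℝ) ≤ 1/(x+j)^2 := by
      intro j
      have h1 : (0:ℝ) < x + j := by positivity
      have h2 : (0:ℝ) < x + (j+1:ℝ) := by positivity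
      rw [div_sub_div _ _ (ne_of_gt h1) (ne_of_gt h2), div_le_div_iff₀ (by positivity) (by positivity)]
      nlinarith [sq_nonneg (x+j)]
    calc 1/x - 1/(x+n)
        = ∑ j ∈ Finset.range n, ((fun i : ℕ => 1/(x+i)) j - (fun i : ℕ => 1/(x+i)) (j+1)) := by
          rw [Finset.sum_range_sub']; simp
      _ ≤ ∑ j ∈ Finset.range n, 1/(x+j)^2 := by
          refine Finset.sum_le_sum (fun j _ => ?_)
          have := step j
          push_cast at this ⊢
          linarith
  -- 1/(x+1) ≤ 1/x - 1/(x+n) for n ≥ 1?? no; instead take limit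
  have hlim : Tendsto (fun n : ℕ => 1/x - 1/(x+n)) atTop (𝓝 (1/x)) := by
    have htop : Tendsto (fun n : ℕ => x + (n:ℝ)) atTop atTop :=
      tendsto_atTop_add_const_left _ x tendsto_natCast_atTop_atTop
    have : Tendsto (fun n : ℕ => 1/(x+n)) atTop (𝓝 0) := by
      simpa [one_div, Pi.inv_def] using htop.inv_tendsto_atTop
    simpa using (tendsto_const_nhds (x := 1/x)).sub this
  have h1x : 1/x ≤ tri x := by
    refine le_of_tendsto hlim (Eventually.of_forall (fun n => ?_))
    exact le_trans (key n) (Summable.sum_le_tsum _ (fun j _ => by positivity) (summable_tri hx))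
  calc 1/(x+1) ≤ 1/x := by
        rw [div_le_div_iff₀ (by positivity) hx]; linarith
    _ ≤ tri x := h1x

noncomputable def d1 (N : ℕ) (x : ℝ) : ℝ := Real.log N - ∑ m ∈ Finset.range (N+1), 1/(x+m)
noncomputable def d2 (N : ℕ) (x : ℝ) : ℝ := ∑ m ∈ Finset.range (N+1), 1/(x+m)^2
noncomputable def G (x : ℝ) : ℝ :=
  -Real.eulerMascheroniConstant + ∑' m : ℕ, (1/((m:ℝ)+1) - 1/(x+m))

lemma summable_aux : Summable (fun j : ℕ => 1 / ((j : ℝ) + 1)^2) := by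
  have := (Real.summable_one_div_nat_pow (p := 2)).2 (by norm_num)
  have h2 := (summable_nat_add_iff (f := fun n : ℕ => 1 / (n:ℝ)^2) 1).2 this
  simpa [add_comm] using h2

lemma tuo_shift {F : ℕ → ℝ → ℝ} {f : ℝ → ℝ} {s : Set ℝ}
    (h : TendstoUniformlyOn F f atTop s) : TendstoUniformlyOn (fun N => F (N+1)) f atTop s := by
  rw [Metric.tendstoUniformlyOn_iff] at h ⊢
  intro ε hε
  exact (tendsto_add_atTop_nat 1).eventually (h ε hε)

lemma hasDerivAt_logGammaSeq (N : ℕ) {x : ℝ} (hx : 0 < x) :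
    HasDerivAt (fun y => Real.BohrMollerup.logGammaSeq y N) (d1 N x) x := by
  unfold Real.BohrMollerup.logGammaSeq d1
  have h1 : HasDerivAt (fun y : ℝ => y * Real.log N + Real.log (Nat.factorial N))
      (Real.log N) x := by
    simpa using (hasDerivAt_mul_const (Real.log N)).add_const (Real.log (Nat.factorial N))
  have h2 : HasDerivAt (fun y : ℝ => ∑ m ∈ Finset.range (N+1), Real.log (y + m))
      (∑ m ∈ Finset.range (N+1), 1/(x+m)) x := by
    apply HasDerivAt.fun_sum
    intro m _
    have hxm : (0:ℝ) < x + m := by positivity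
    have h := (Real.hasDerivAt_log (ne_of_gt hxm)).comp x ((hasDerivAt_id x).add_const (m:ℝ))
    exact h.congr_deriv (by simp)
  exact h1.sub h2

lemma hasDerivAt_d1 (N : ℕ) {x : ℝ} (hx : 0 < x) : HasDerivAt (d1 N) (d2 N x) x := by
  unfold d1 d2
  have h2 : HasDerivAt (fun y : ℝ => ∑ m ∈ Finset.range (N+1), 1/(y+m))
      (∑ m ∈ Finset.range (N+1), -(1/(x+m)^2)) x := by
    apply HasDerivAt.fun_sum
    intro m _
    have hxm : (0:ℝ) < x + m := by positivity
    have h := ((hasDerivAt_id x).add_const (m:ℝ)).inv (ne_of_gt hxm)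
    simp only [one_div]
    exact h.congr_deriv (by simp [div_eq_mul_inv])
  have h := (hasDerivAt_const x (Real.log N)).sub h2
  exact h.congr_deriv (by simp)

lemma harmonic_cast_eq (n : ℕ) :
    ((harmonic n : ℚ) : ℝ) = ∑ m ∈ Finset.range n, 1/((m:ℝ)+1) := by
  rw [harmonic]
  push_cast
  exact Finset.sum_congr rfl (fun m _ => by rw [one_div])

lemma compact_bounds {K : Set ℝ} (hK : K ⊆ Set.Ioi (0:ℝ)) (hKc : IsCompact K)
    (hne : K.Nonempty) : ∃ a b : ℝ, 0 < a ∧ a ≤ 1 ∧ 1 ≤ b ∧ K ⊆ Set.Icc a b := by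
  refine ⟨min (sInf K) 1, max (sSup K) 1, ?_, min_le_right _ _, le_max_right _ _, ?_⟩
  · exact lt_min (hK (hKc.sInf_mem hne)) one_pos
  · intro x hx
    exact ⟨le_trans (min_le_left _ _) (csInf_le hKc.bddBelow hx),
      le_trans (le_csSup hKc.bddAbove hx) (le_max_left _ _)⟩

lemma tlu_d2 : TendstoLocallyUniformlyOn d2 tri atTop (Set.Ioi (0:ℝ)) := by
  rw [tendstoLocallyUniformlyOn_iff_forall_isCompact isOpen_Ioi]
  intro K hK hKc
  rcases K.eq_empty_or_nonempty with rfl | hne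
  · exact tendstoUniformlyOn_empty
  obtain ⟨a, b, ha, ha1, hb, hab⟩ := compact_bounds hK hKc hne
  have hbd : ∀ (m : ℕ), ∀ x ∈ K, ‖1/(x+(m:ℝ))^2‖ ≤ (1/a^2) * (1/((m:ℝ)+1)^2) := by
    intro m x hx
    obtain ⟨hax, hxb⟩ := hab hx
    have hxm : (0:ℝ) < x + m := by
      have := (Nat.cast_nonneg m : (0:ℝ) ≤ m); linarith
    have key : a * ((m:ℝ)+1) ≤ x + m := by
      have h1 : a * ((m:ℝ)+1) = a + a * m := by ring
      have h2 : a * (m:ℝ) ≤ m := by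
        have := (Nat.cast_nonneg m : (0:ℝ) ≤ m); nlinarith
      linarith
    rw [Real.norm_eq_abs, abs_of_pos (by positivity)]
    calc (1:ℝ)/(x+(m:ℝ))^2 ≤ 1/(a*((m:ℝ)+1))^2 := by
          apply one_div_le_one_div_of_le (by positivity)
          exact pow_le_pow_left₀ (by positivity) key 2
      _ = (1/a^2) * (1/((m:ℝ)+1)^2) := by rw [mul_pow]; field_simp
  have hu : Summable (fun m : ℕ => (1/a^2) * (1/((m:ℝ)+1)^2)) := summable_aux.mul_left _
  have base := tendstoUniformlyOn_tsum_nat hu hbd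
  have := tuo_shift base
  exact this

lemma g_bound {a b : ℝ} (ha : 0 < a) (ha1 : a ≤ 1) (hb : 1 ≤ b) (m : ℕ) {x : ℝ}
    (hax : a ≤ x) (hxb : x ≤ b) :
    ‖1/((m:ℝ)+1) - 1/(x+m)‖ ≤ (b+1) * ((1/a) * (1/((m:ℝ)+1)^2)) := by
  have hm1 : (0:ℝ) < (m:ℝ)+1 := by positivity
  have hxm : (0:ℝ) < x + m := by
    have := (Nat.cast_nonneg m : (0:ℝ) ≤ m); linarith
  have key : a * ((m:ℝ)+1) ≤ x + m := by
    have h2 : a * (m:ℝ) ≤ m := by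
      have := (Nat.cast_nonneg m : (0:ℝ) ≤ m); nlinarith
    nlinarith
  have heq : 1/((m:ℝ)+1) - 1/(x+m) = (x-1)/(((m:ℝ)+1)*(x+m)) := by
    rw [div_sub_div _ _ (ne_of_gt hm1) (ne_of_gt hxm)]
    congr 1
    ring
  rw [Real.norm_eq_abs, heq, abs_div, abs_of_pos (mul_pos hm1 hxm)]
  have hnum : |x - 1| ≤ b + 1 := by
    rw [abs_le]; constructor <;> linarith
  have hden : a * ((m:ℝ)+1)^2 ≤ ((m:ℝ)+1)*(x+m) := by nlinarith
  calc |x-1| / (((m:ℝ)+1)*(x+m)) ≤ (b+1) / (a * ((m:ℝ)+1)^2) := by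
        apply div_le_div₀ (by linarith) hnum (by positivity) hden
    _ = (b+1) * ((1/a) * (1/((m:ℝ)+1)^2)) := by field_simp

lemma summable_g {x : ℝ} (hx : 0 < x) : Summable (fun m : ℕ => 1/((m:ℝ)+1) - 1/(x+m)) := by
  have ha : 0 < min x 1 := lt_min hx one_pos
  have h := fun m : ℕ => g_bound ha (min_le_right x 1) (le_max_right x 1) m
      (min_le_left x 1) (le_max_left x 1)
  exact Summable.of_norm (Summable.of_nonneg_of_le (fun m => norm_nonneg _) h
    ((summable_aux.mul_left _).mul_left _))

lemma d1_eq (N : ℕ) (x : ℝ) :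
    d1 N x = (Real.log N - ((harmonic (N+1) : ℚ) : ℝ))
      + ∑ m ∈ Finset.range (N+1), (1/((m:ℝ)+1) - 1/(x+m)) := by
  rw [d1, Finset.sum_sub_distrib, harmonic_cast_eq]
  ring

lemma tendsto_c : Tendsto (fun N : ℕ => Real.log N - ((harmonic (N+1) : ℚ) : ℝ)) atTop
    (𝓝 (-Real.eulerMascheroniConstant)) := by
  have h1 : Tendsto (fun N : ℕ => ((harmonic (N+1) : ℚ) : ℝ) - Real.log ((N:ℝ)+1)) atTop
      (𝓝 Real.eulerMascheroniConstant) := by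
    have := Real.tendsto_harmonic_sub_log.comp (tendsto_add_atTop_nat 1)
    refine this.congr (fun N => ?_)
    simp only [Function.comp_apply]
    push_cast
    ring
  have h2 : Tendsto (fun N : ℕ => Real.log ((N:ℝ)+1) - Real.log N) atTop (𝓝 0) := by
    have := Real.tendsto_log_nat_add_one_sub_log
    refine this.congr (fun N => ?_)
    push_cast
    ring
  have h3 := (h1.add h2).neg
  rw [add_zero] at h3
  refine h3.congr (fun N => ?_)
  ring

lemma tlu_d1 : TendstoLocallyUniformlyOn d1 G atTop (Set.Ioi (0:ℝ)) := by
  rw [tendstoLocallyUniformlyOn_iff_forall_isCompact isOpen_Ioi]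
  intro K hK hKc
  rcases K.eq_empty_or_nonempty with rfl | hne
  · exact tendstoUniformlyOn_empty
  obtain ⟨a, b, ha, ha1, hb, hab⟩ := compact_bounds hK hKc hne
  have hbd : ∀ (m : ℕ), ∀ x ∈ K, ‖1/((m:ℝ)+1) - 1/(x+m)‖ ≤ (b+1) * ((1/a) * (1/((m:ℝ)+1)^2)) :=
    fun m x hx => g_bound ha ha1 hb m (hab hx).1 (hab hx).2
  have hu : Summable (fun m : ℕ => (b+1) * ((1/a) * (1/((m:ℝ)+1)^2))) :=
    (summable_aux.mul_left _).mul_left _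
  have base := tuo_shift (tendstoUniformlyOn_tsum_nat hu hbd)
  have hconst : TendstoUniformlyOn (fun (N:ℕ) (_:ℝ) => Real.log N - ((harmonic (N+1):ℚ):ℝ))
      (fun _ => -Real.eulerMascheroniConstant) atTop K :=
    tendsto_c.tendstoUniformlyOn_const K
  have hadd := hconst.add base
  refine TendstoUniformlyOn.congr ?_ (Eventually.of_forall fun N x _ => (d1_eq N x).symm)
  exact hadd

lemma hasDerivAt_logGamma {x : ℝ} (hx : 0 < x) :
    HasDerivAt (fun y => Real.log (Real.Gamma y)) (G x) x := by
  refine hasDerivAt_of_tendstoLocallyUniformlyOn isOpen_Ioi tlu_d1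
    (Eventually.of_forall fun N y hy => hasDerivAt_logGammaSeq N hy)
    (fun y hy => Real.BohrMollerup.tendsto_log_gamma hy) hx

lemma psi_eq {x : ℝ} (hx : 0 < x) : psi x = G x := (hasDerivAt_logGamma hx).deriv

lemma hasDerivAt_logGamma' {x : ℝ} (hx : 0 < x) :
    HasDerivAt (fun y => Real.log (Real.Gamma y)) (psi x) x := by
  rw [psi_eq hx]; exact hasDerivAt_logGamma hx

lemma hasDerivAt_G {x : ℝ} (hx : 0 < x) : HasDerivAt G (tri x) x :=
  hasDerivAt_of_tendstoLocallyUniformlyOn isOpen_Ioi tlu_d2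
    (Eventually.of_forall fun N y hy => hasDerivAt_d1 N hy)
    (fun y hy => tlu_d1.tendsto_at hy) hx

lemma hasDerivAt_psi {x : ℝ} (hx : 0 < x) : HasDerivAt psi (tri x) x := by
  refine (hasDerivAt_G hx).congr_of_eventuallyEq ?_
  filter_upwards [eventually_gt_nhds hx] with y hy using psi_eq hy

noncomputable def cc (m : ℕ) : ℝ := 1/2 + ((m / 2 : ℕ) : ℝ)

lemma cc_half_le (m : ℕ) : 1/2 ≤ cc m := by
  have : (0:ℝ) ≤ ((m/2:ℕ):ℝ) := Nat.cast_nonneg _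
  rw [cc]; linarith

lemma cc_pos (m : ℕ) : 0 < cc m := lt_of_lt_of_le (by norm_num) (cc_half_le m)

lemma gueMgf_log_eq (n : ℕ) {s : ℝ} (hs : -1 < s) :
    Real.log (gueMgf n s) = s * ((n:ℝ)/2 * Real.log 2)
      + ∑ m ∈ Finset.Icc 1 n,
          (Real.log (Real.Gamma (s/2 + cc m)) - Real.log (Real.Gamma (cc m))) := by
  have harg : ∀ m : ℕ, 0 < s/2 + cc m := by
    intro m
    have h := cc_half_le m; linarith
  have hpos : ∀ m ∈ Finset.Icc 1 n,
      0 < Real.Gamma (s / 2 + 1/2 + ((m / 2 : ℕ) : ℝ)) / Real.Gamma (1/2 + ((m/2:ℕ):ℝ)) := by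
    intro m _
    apply div_pos
    · apply Real.Gamma_pos_of_pos
      have := harg m; rw [cc] at this; linarith
    · exact Real.Gamma_pos_of_pos (cc_pos m)
  unfold gueMgf
  rw [Real.log_mul (Real.rpow_pos_of_pos two_pos _).ne' (Finset.prod_pos hpos).ne',
    Real.log_rpow two_pos, Real.log_prod (fun m hm => (hpos m hm).ne')]
  congr 1
  · ring
  refine Finset.sum_congr rfl (fun m hm => ?_)
  have h1 : 0 < Real.Gamma (s / 2 + 1/2 + ((m / 2 : ℕ) : ℝ)) := by
    apply Real.Gamma_pos_of_pos
    have := harg m; rw [cc] at this; linarith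
  have h2 : 0 < Real.Gamma ((1:ℝ)/2 + ((m/2:ℕ):ℝ)) := Real.Gamma_pos_of_pos (cc_pos m)
  rw [Real.log_div h1.ne' h2.ne']
  have harg2 : s / 2 + 1/2 + ((m / 2 : ℕ) : ℝ) = s/2 + cc m := by rw [cc]; ring
  rw [harg2, cc]

noncomputable def F1 (n : ℕ) (s : ℝ) : ℝ :=
  (n:ℝ)/2 * Real.log 2 + ∑ m ∈ Finset.Icc 1 n, psi (s/2 + cc m) * (1/2)

lemma hasDerivAt_logMgf (n : ℕ) {s : ℝ} (hs : -1 < s) :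
    HasDerivAt (fun t => Real.log (gueMgf n t)) (F1 n s) s := by
  have hmain : HasDerivAt (fun t : ℝ => t * ((n:ℝ)/2 * Real.log 2)
      + ∑ m ∈ Finset.Icc 1 n,
          (Real.log (Real.Gamma (t/2 + cc m)) - Real.log (Real.Gamma (cc m))))
      (F1 n s) s := by
    apply HasDerivAt.add
    · exact hasDerivAt_mul_const ((n:ℝ)/2 * Real.log 2)
    · apply HasDerivAt.fun_sum
      intro m _
      have harg : 0 < s/2 + cc m := by have := cc_half_le m; linarith
      have inner : HasDerivAt (fun t : ℝ => t/2 + cc m) (1/2) s := by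
        simpa using ((hasDerivAt_id s).div_const 2).add_const (cc m)
      have outer := hasDerivAt_logGamma' harg
      exact ((outer.comp s inner).sub_const _)
  refine hmain.congr_of_eventuallyEq ?_
  filter_upwards [eventually_gt_nhds hs] with t ht using gueMgf_log_eq n ht

lemma hasDerivAt_F1 (n : ℕ) :
    HasDerivAt (F1 n) (∑ m ∈ Finset.Icc 1 n, tri (cc m) * (1/2) * (1/2)) 0 := by
  apply HasDerivAt.const_add
  apply HasDerivAt.fun_sum
  intro m _
  have inner : HasDerivAt (fun t : ℝ => t/2 + cc m) (1/2) (0:ℝ) := by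
    simpa using ((hasDerivAt_id (0:ℝ)).div_const 2).add_const (cc m)
  have outer : HasDerivAt psi (tri (cc m)) ((fun t : ℝ => t/2 + cc m) 0) := by
    have h0 : (fun t : ℝ => t/2 + cc m) 0 = cc m := by norm_num
    rw [h0]; exact hasDerivAt_psi (cc_pos m)
  exact (outer.comp 0 inner).mul_const (1/2)

lemma gueCumulant_eq (n : ℕ) :
    gueCumulant 2 n = (∑ m ∈ Finset.Icc 1 n, tri (cc m)) / 4 := by
  rw [gueCumulant]
  conv_lhs => rw [show (2:ℕ) = 1 + 1 by norm_num, iteratedDeriv_succ, iteratedDeriv_one]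
  have hd : Set.EqOn (deriv fun s => Real.log (gueMgf n s)) (F1 n) (Set.Ioi (-1:ℝ)) :=
    fun s hs => (hasDerivAt_logMgf n hs).deriv
  have heq : deriv (fun s => Real.log (gueMgf n s)) =ᶠ[𝓝 (0:ℝ)] F1 n := by
    filter_upwards [eventually_gt_nhds (show (-1:ℝ) < 0 by norm_num)] with t ht using hd ht
  rw [heq.deriv_eq, (hasDerivAt_F1 n).deriv, Finset.sum_div]
  exact Finset.sum_congr rfl (fun m _ => by ring)

lemma sum_cc (n : ℕ) :
    ∑ m ∈ Finset.Icc 1 n, tri (cc m)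
      = 2 * (∑ k ∈ Finset.range (n/2 + 1), tri (1/2 + (k:ℝ))) - tri (1/2)
        - (if Even n then tri (1/2 + ((n/2 : ℕ):ℝ)) else 0) := by
  induction n with
  | zero =>
    simp [Finset.sum_range_one]
    ring
  | succ n ih =>
    rw [Finset.sum_Icc_succ_top (by omega) , ih]
    rcases Nat.even_or_odd n with he | ho
    · obtain ⟨K, hK⟩ := he
      subst hK
      have h1 : (K + K) / 2 = K := by omega
      have h2 : (K + K + 1) / 2 = K := by omega
      have h3 : ¬ Even (K + K + 1) := by rw [Nat.even_iff]; omega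
      have h4 : Even (K + K) := ⟨K, rfl⟩
      rw [h1, h2, if_pos h4, if_neg h3]
      have h5 : cc (K + K + 1) = 1/2 + ((K:ℕ):ℝ) := by rw [cc, h2]
      rw [h5]
      ring
    · obtain ⟨K, hK⟩ := ho
      subst hK
      have h1 : (2*K + 1) / 2 = K := by omega
      have h2 : (2*K + 1 + 1) / 2 = K + 1 := by omega
      have h3 : ¬ Even (2*K + 1) := by rw [Nat.even_iff]; omega
      have h4 : Even (2*K + 1 + 1) := by rw [Nat.even_iff]; omega
      rw [h1, h2, if_neg h3, if_pos h4]
      have h5 : cc (2*K + 1 + 1) = 1/2 + (((K+1):ℕ):ℝ) := by rw [cc, h2]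
      rw [h5]
      conv_rhs => rw [Finset.sum_range_succ]
      ring

lemma sum_tri_closed (K : ℕ) :
    ∑ k ∈ Finset.range (K+1), tri (1/2 + (k:ℝ))
      = ((K:ℝ)+1) * tri ((K:ℝ) + 3/2) + ∑ j ∈ Finset.range (K+1), 1/((j:ℝ)+1/2)
        + (tri (1/2) - tri ((K:ℝ)+3/2))/2 := by
  induction K with
  | zero =>
    have h := tri_shift (show (0:ℝ) < 1/2 by norm_num)
    norm_num at h
    simp only [Finset.sum_range_one, Nat.cast_zero, add_zero, zero_add]
    norm_num
    linarith
  | succ K ih =>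
    have hpos : (0:ℝ) < (K:ℝ) + 3/2 := by positivity
    have hsh := tri_shift hpos
    have e1 : tri (1/2 + (((K+1):ℕ):ℝ)) = tri ((K:ℝ) + 3/2) := by
      congr 1; push_cast; ring
    have e3 : (((K+1):ℕ):ℝ) + 3/2 = (K:ℝ) + 3/2 + 1 := by push_cast; ring
    rw [Finset.sum_range_succ, ih, e1]
    conv_rhs => rw [Finset.sum_range_succ]
    rw [e3, hsh]
    have e4 : (((K+1):ℕ):ℝ) + 1/2 = (K:ℝ) + 3/2 := by push_cast; ring
    have e5 : (((K+1):ℕ):ℝ) + 1 = (K:ℝ) + 2 := by push_cast; ring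
    rw [e4, e5]
    set S := ∑ j ∈ Finset.range (K+1), 1/((j:ℝ)+1/2) with hS
    set T := tri ((K:ℝ) + 3/2 + 1) with hT
    set A := tri ((1:ℝ)/2) with hA
    have hne : ((K:ℝ) + 3/2) ≠ 0 := ne_of_gt hpos
    field_simp
    ring

lemma sum_half_harmonic (K : ℕ) :
    ∑ j ∈ Finset.range (K+1), 1/((j:ℝ)+1/2)
      = 2 * ((harmonic (2*K+2) : ℚ) : ℝ) - ((harmonic (K+1) : ℚ) : ℝ) := by
  induction K with
  | zero =>
    norm_num [Finset.sum_range_one, harmonic]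
  | succ K ih =>
    rw [Finset.sum_range_succ, ih]
    have h1 : 2*(K+1)+2 = (2*K+2) + 1 + 1 := by ring
    have h2 : K + 1 + 1 = (K + 1) + 1 := rfl
    rw [h1, harmonic_succ (2*K+2+1), harmonic_succ (2*K+2), h2, harmonic_succ (K+1)]
    push_cast
    have d1 : ((2*K:ℝ)+2) + 1 ≠ 0 := by positivity
    have d2 : ((2*K:ℝ)+2) + 1 + 1 ≠ 0 := by positivity
    have d3 : ((K:ℝ)+1) + 1 ≠ 0 := by positivity
    have d4 : ((K:ℝ)+1) + 1/2 ≠ 0 := by positivity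
    field_simp
    ring

lemma harmonic_gamma_bound (n : ℕ) (hn : 1 ≤ n) :
    |((harmonic n : ℚ) : ℝ) - Real.log n - Real.eulerMascheroniConstant| ≤ 1/n := by
  have h1 := Real.eulerMascheroniSeq_lt_eulerMascheroniConstant n
  have h2 := Real.eulerMascheroniConstant_lt_eulerMascheroniSeq' n
  rw [Real.eulerMascheroniSeq] at h1
  rw [Real.eulerMascheroniSeq', if_neg (by omega)] at h2
  have hn0 : (0:ℝ) < n := by exact_mod_cast hn
  have hlog : Real.log ((n:ℝ)+1) - Real.log n ≤ 1/n := by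
    rw [← Real.log_div (by positivity) (by positivity)]
    have h3 := Real.log_le_sub_one_of_pos (show (0:ℝ) < ((n:ℝ)+1)/n by positivity)
    have heq : ((n:ℝ)+1)/n - 1 = 1/n := by field_simp; ring
    linarith
  rw [abs_le]
  constructor
  · have : (0:ℝ) < 1/n := by positivity
    linarith
  · linarith

set_option maxHeartbeats 2000000 in
theorem gueVariance_asymptotic :
    (fun n : ℕ => gueCumulant 2 n
        - ((1/2) * Real.log (2 * (n / 2 : ℕ))
            + (1/2) * (Real.eulerMascheroniConstant + Real.log 2 + 1)))
      =O[atTop] (fun n : ℕ => 1 / (n : ℝ)) := by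
  rw [Asymptotics.isBigO_iff]
  refine ⟨12, ?_⟩
  filter_upwards [eventually_ge_atTop 2] with n hn
  set K := n / 2 with hKdef
  have hK1 : 1 ≤ K := by omega
  have hKpos : (0:ℝ) < (K:ℝ) := by exact_mod_cast hK1
  have hK1' : (1:ℝ) ≤ (K:ℝ) := by exact_mod_cast hK1
  have e1 := gueCumulant_eq n
  rw [sum_cc n, sum_tri_closed (n/2), sum_half_harmonic (n/2), ← hKdef] at e1
  set ε : ℝ := if Even n then tri (1/2 + ((K : ℕ):ℝ)) else 0 with hε
  set H2 : ℝ := ((harmonic (2*K+2) : ℚ) : ℝ) with hH2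
  set H1 : ℝ := ((harmonic (K+1) : ℚ) : ℝ) with hH1
  set t : ℝ := tri ((K:ℝ) + 3/2) with ht
  -- bounds on t
  have ht_ub : t * ((K:ℝ)+1/2) ≤ 1 := by
    have h := tri_le (show (1:ℝ) < (K:ℝ)+3/2 by linarith)
    rw [show (K:ℝ) + 3/2 - 1 = (K:ℝ) + 1/2 by ring] at h
    rw [← le_div_iff₀ (by positivity)]
    exact h
  have ht_lb : 1 ≤ t * ((K:ℝ)+5/2) := by
    have h := le_tri (show (0:ℝ) < (K:ℝ)+3/2 by linarith)
    rw [show (K:ℝ) + 3/2 + 1 = (K:ℝ) + 5/2 by ring] at h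
    rw [← div_le_iff₀ (by positivity)]
    exact h
  -- bounds on ε
  have hε_nonneg : 0 ≤ ε := by
    rw [hε]
    by_cases hpar : Even n
    · rw [if_pos hpar]; exact le_of_lt (tri_pos (by positivity))
    · rw [if_neg hpar]
  have hε_ub : ε ≤ 2/(K:ℝ) := by
    rw [hε]
    by_cases hpar : Even n
    · rw [if_pos hpar]
      have h := tri_le (show (1:ℝ) < 1/2 + ((K:ℕ):ℝ) by push_cast; linarith)
      rw [show (1:ℝ)/2 + ((K:ℕ):ℝ) - 1 = (K:ℝ) - 1/2 by push_cast; ring] at h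
      refine le_trans h ?_
      rw [div_le_div_iff₀ (by linarith) (by positivity)]
      linarith
    · rw [if_neg hpar]; positivity
  -- gamma bounds
  have hδ2 : |H2 - Real.log (2*(K:ℝ)+2) - Real.eulerMascheroniConstant| ≤ 1/(2*(K:ℝ)+2) := by
    have h := harmonic_gamma_bound (2*K+2) (by omega)
    have harg : ((2*K+2 : ℕ):ℝ) = 2*(K:ℝ)+2 := by push_cast; ring
    rw [harg] at h
    exact h
  have hδ1 : |H1 - Real.log ((K:ℝ)+1) - Real.eulerMascheroniConstant| ≤ 1/((K:ℝ)+1) := by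
    have h := harmonic_gamma_bound (K+1) (by omega)
    have harg : ((K+1 : ℕ):ℝ) = (K:ℝ)+1 := by push_cast; ring
    rw [harg] at h
    exact h
  -- log bounds
  have hlog1 : 0 ≤ Real.log ((K:ℝ)+1) - Real.log (K:ℝ) :=
    sub_nonneg.2 (Real.log_le_log (by positivity) (by linarith))
  have hlog2 : Real.log ((K:ℝ)+1) - Real.log (K:ℝ) ≤ 1/(K:ℝ) := by
    rw [← Real.log_div (by positivity) (by positivity)]
    have h3 := Real.log_le_sub_one_of_pos (show (0:ℝ) < ((K:ℝ)+1)/(K:ℝ) by positivity)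
    have heq : ((K:ℝ)+1)/(K:ℝ) - 1 = 1/(K:ℝ) := by field_simp; ring
    linarith
  -- log decompositions
  have l1 : Real.log (2*(K:ℝ)+2) = Real.log 2 + Real.log ((K:ℝ)+1) := by
    rw [show 2*(K:ℝ)+2 = 2*((K:ℝ)+1) by ring, Real.log_mul two_ne_zero (by positivity)]
  have l2 : Real.log (2*(K:ℝ)) = Real.log 2 + Real.log (K:ℝ) := by
    rw [Real.log_mul two_ne_zero (by positivity)]
  -- decomposition of the error
  have hE : gueCumulant 2 n
      - ((1/2) * Real.log (2 * ((K:ℕ) : ℝ))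
          + (1/2) * (Real.eulerMascheroniConstant + Real.log 2 + 1))
      = (((2*(K:ℝ)+1)*t - 2)/4 - ε/4
        + (H2 - Real.log (2*(K:ℝ)+2) - Real.eulerMascheroniConstant))
        - (H1 - Real.log ((K:ℝ)+1) - Real.eulerMascheroniConstant)/2
        + (Real.log ((K:ℝ)+1) - Real.log (K:ℝ))/2 := by
    rw [e1, l1, l2]
    ring
  -- per-term absolute bounds
  have b1 : |((2*(K:ℝ)+1)*t - 2)/4| ≤ 1/(K:ℝ) := by
    rw [abs_le]
    have h4 : (0:ℝ) < (K:ℝ)+5/2 := by linarith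
    constructor
    · have h5 : 2 - (2*(K:ℝ)+1)*t ≤ 4/((K:ℝ)+5/2) := by
        rw [le_div_iff₀ h4]
        nlinarith [mul_le_mul_of_nonneg_left ht_lb (show (0:ℝ) ≤ 2*(K:ℝ)+1 by linarith)]
      have h6 : 4/((K:ℝ)+5/2) ≤ 4/(K:ℝ) := by gcongr <;> linarith
      have h7 : 4/(K:ℝ) = 4*(1/(K:ℝ)) := by ring
      linarith [h5, h6, h7]
    · have h5 : (2*(K:ℝ)+1) * t ≤ 2 := by nlinarith
      have h7 : (0:ℝ) < 1/(K:ℝ) := by positivity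
      linarith
  have hC := abs_le.mp hδ2
  have hD := abs_le.mp hδ1
  have hb1 := abs_le.mp b1
  have hinv1 : 1/(2*(K:ℝ)+2) ≤ 1/(K:ℝ) := by gcongr <;> linarith
  have hinv2 : 1/((K:ℝ)+1) ≤ 1/(K:ℝ) := by gcongr <;> linarith
  have hnpos : (0:ℝ) < (n:ℝ) := by
    have : (2:ℝ) ≤ (n:ℝ) := by exact_mod_cast hn
    linarith
  have hKn : 1/(K:ℝ) ≤ 3/(n:ℝ) := by
    have h7 : n ≤ 2*K+1 := by omega
    have h8 : (n:ℝ) ≤ 2*(K:ℝ)+1 := by exact_mod_cast h7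
    rw [div_le_div_iff₀ hKpos hnpos]
    nlinarith
  have heq1 : 2/(K:ℝ) = 2*(1/(K:ℝ)) := by ring
  have heq2 : 3/(n:ℝ) = 3*(1/(n:ℝ)) := by ring
  have hninv : (0:ℝ) < 1/(n:ℝ) := by positivity
  rw [hE, Real.norm_eq_abs, Real.norm_eq_abs, abs_of_nonneg (show (0:ℝ) ≤ 1/(n:ℝ) by positivity),
    abs_le]
  constructor
  · linarith [hb1.1, hb1.2, hC.1, hC.2, hD.1, hD.2, heq1, heq2, hninv]
  · linarith [hb1.1, hb1.2, hC.1, hC.2, hD.1, hD.2, heq1, heq2, hninv]
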